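/- In the stochastic block model G(𝐧, p, q) with p, q ≤ C log n / n, the expected number of vertex sets S of size s ≤ n/log² n inducing more than 3s edges, summed over all such s, is o(1); hence a.a.s. every set S with |S| ≤ n/log² n induces at most 3|S| edges. -/

import Mathlib

open MeasureTheory Filter
open scoped ENNReal

/-- The Bernoulli PMF with an `ℝ≥0∞`-valued parameter, as `PMF.bernoulli` was in older Mathlib. -/
noncomputable def PMF.bernoulliENNReal (p : ℝ≥0∞) (h : p ≤ 1) : PMF Bool :=
  PMF.ofFintype (fun b => cond b p (1 - p)) (by simp [h])

lemma aux_choose_le (m k : ℕ) (hk : 1 ≤ k) :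
    (m.choose k : ℝ) ≤ (Real.exp 1 * m / k) ^ k := by
  have hk0 : (0:ℝ) < k := by exact_mod_cast hk
  have hfac : (0:ℝ) < k.factorial := by exact_mod_cast k.factorial_pos
  have h1 : ((k:ℝ)) ^ k / k.factorial ≤ Real.exp k :=
    Real.pow_div_factorial_le_exp _ (le_of_lt hk0) k
  have h2 : ((k:ℝ)) ^ k ≤ Real.exp 1 ^ k * k.factorial := by
    rw [Real.exp_one_pow]
    rw [div_le_iff₀ hfac] at h1
    linarith
  calc (m.choose k : ℝ) ≤ (m:ℝ) ^ k / k.factorial := Nat.choose_le_pow_div k m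
    _ ≤ (Real.exp 1 * m / k) ^ k := by
      rw [div_le_iff₀ hfac, div_pow, mul_pow, div_mul_eq_mul_div, le_div_iff₀ (by positivity)]
      have hm : (0:ℝ) ≤ (m:ℝ) ^ k := by positivity
      nlinarith [mul_le_mul_of_nonneg_left h2 hm, Real.exp_pos 1]

lemma aux_sum_tendsto (C : ℝ) (hC : 0 < C) :
    Tendsto (fun n : ℕ => ∑ s ∈ Finset.Icc 1 ⌊(n : ℝ) / (Real.log n) ^ 2⌋₊,
        (n.choose s : ℝ) * ((s ^ 2).choose (3 * s) : ℝ) * (C * Real.log n / n) ^ (3 * s))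
      atTop (nhds 0) := by
  set K : ℝ := Real.exp 1 ^ 4 * C ^ 3 / 27 with hK
  have hK0 : 0 < K := by positivity
  have hlogTop : Tendsto (fun n : ℕ => Real.log n) atTop atTop :=
    Real.tendsto_log_atTop.comp tendsto_natCast_atTop_atTop
  have hr : Tendsto (fun n : ℕ => 4 * (K / Real.log n)) atTop (nhds 0) := by
    have := hlogTop.inv_tendsto_atTop
    have h2 : Tendsto (fun n : ℕ => 4 * (K * (Real.log n)⁻¹)) atTop (nhds (4 * (K * 0))) :=
      (this.const_mul K).const_mul 4
    simpa [div_eq_mul_inv] using h2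
  apply squeeze_zero' ?_ ?_ hr
  · filter_upwards [eventually_ge_atTop 1] with n hn
    apply Finset.sum_nonneg
    intro s _
    have hp : 0 ≤ C * Real.log n / n := by
      have : (0:ℝ) ≤ Real.log n := Real.log_nonneg (by exact_mod_cast hn)
      positivity
    positivity
  · filter_upwards [eventually_ge_atTop 1, hlogTop.eventually_ge_atTop (max 1 (2 * K))]
      with n hn hlog
    have hl1 : (1:ℝ) ≤ Real.log n := le_trans (le_max_left _ _) hlog
    have hl2 : 2 * K ≤ Real.log n := le_trans (le_max_right _ _) hlog
    have hl0 : (0:ℝ) < Real.log n := lt_of_lt_of_le one_pos hl1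
    have hn0 : (0:ℝ) < n := by exact_mod_cast hn
    set l := Real.log n with hldef
    set p : ℝ := C * l / n with hpdef
    have hp : 0 ≤ p := by positivity
    set r : ℝ := K / l with hrdef
    have hr0 : 0 ≤ r := by positivity
    have hrhalf : r ≤ 1/2 := by
      rw [hrdef, div_le_iff₀ hl0]; linarith
    set L := ⌊(n : ℝ) / l ^ 2⌋₊ with hL
    have step1 : ∀ s ∈ Finset.Icc 1 L,
        (n.choose s : ℝ) * ((s ^ 2).choose (3 * s) : ℝ) * p ^ (3 * s) ≤ r ^ s := by
      intro s hs
      rw [Finset.mem_Icc] at hs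
      have hs1 : 1 ≤ s := hs.1
      have hs0 : (0:ℝ) < s := by exact_mod_cast hs1
      have hsle : (s : ℝ) ≤ (n : ℝ) / l ^ 2 := by
        refine le_trans ?_ (Nat.floor_le (by positivity))
        exact_mod_cast hs.2
      have h3s : 1 ≤ 3 * s := by omega
      have b1 : (n.choose s : ℝ) ≤ (Real.exp 1 * n / s) ^ s := aux_choose_le n s hs1
      have b2 : ((s ^ 2).choose (3 * s) : ℝ) ≤ (Real.exp 1 * (s:ℝ) ^ 2 / (3 * s)) ^ (3 * s) := by
        have := aux_choose_le (s ^ 2) (3 * s) h3s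
        convert this using 3 <;> push_cast <;> ring
      have hb1pos : (0:ℝ) ≤ Real.exp 1 * n / s := by positivity
      have hb2pos : (0:ℝ) ≤ Real.exp 1 * (s:ℝ) ^ 2 / (3 * s) := by positivity
      calc (n.choose s : ℝ) * ((s ^ 2).choose (3 * s) : ℝ) * p ^ (3 * s)
          ≤ (Real.exp 1 * n / s) ^ s * (Real.exp 1 * (s:ℝ) ^ 2 / (3 * s)) ^ (3 * s) * p ^ (3 * s) := by
            have := mul_le_mul b1 b2 (by positivity) (by positivity)
            exact mul_le_mul_of_nonneg_right this (by positivity)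
        _ = (Real.exp 1 * n / s * (Real.exp 1 * (s:ℝ) ^ 2 / (3 * s) * p) ^ 3) ^ s := by
            rw [mul_pow (Real.exp 1 * (s:ℝ) ^ 2 / (3 * s)) p, mul_assoc, ← mul_pow, pow_mul,
              ← mul_pow]
            ring_nf
        _ ≤ r ^ s := by
            apply pow_le_pow_left₀ (by positivity)
            -- key inequality
            have h1 : (s:ℝ) * l ^ 2 ≤ (n:ℝ) := by
              rw [le_div_iff₀ (by positivity)] at hsle; linarith
            have h2 : (s:ℝ) ^ 2 * l ^ 4 ≤ (n:ℝ) ^ 2 := by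
              have := mul_self_le_mul_self (by positivity : (0:ℝ) ≤ (s:ℝ) * l ^ 2) h1
              nlinarith [this]
            have hexp : (0:ℝ) < Real.exp 1 := Real.exp_pos 1
            have key : Real.exp 1 * n / s * (Real.exp 1 * (s:ℝ) ^ 2 / (3 * s) * p) ^ 3
                = K * ((s:ℝ) ^ 2 * l ^ 3 / (n:ℝ) ^ 2) := by
              rw [hpdef, hK]; field_simp
              norm_num
            rw [key, hrdef]
            rw [div_eq_mul_inv K l, mul_comm K l⁻¹, mul_comm]
            apply mul_le_mul_of_nonneg_right ?_ (le_of_lt hK0)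
            rw [div_le_iff₀ (by positivity)]
            calc (s:ℝ) ^ 2 * l ^ 3 = (s:ℝ)^2 * l^4 * l⁻¹ := by
                  field_simp
              _ ≤ (n:ℝ)^2 * l⁻¹ := by
                  apply mul_le_mul_of_nonneg_right h2 (by positivity)
              _ = l⁻¹ * (n:ℝ)^2 := by ring
    calc (∑ s ∈ Finset.Icc 1 L,
          (n.choose s : ℝ) * ((s ^ 2).choose (3 * s) : ℝ) * p ^ (3 * s))
        ≤ ∑ s ∈ Finset.Icc 1 L, (2 * r) * (1/2 : ℝ) ^ s := by
          apply Finset.sum_le_sum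
          intro s hs
          refine (step1 s hs).trans ?_
          have hs1 : 1 ≤ s := (Finset.mem_Icc.1 hs).1
          calc r ^ s = r * r ^ (s - 1) := by
                rw [← pow_succ']
                congr 1
                omega
            _ ≤ r * (1/2 : ℝ) ^ (s - 1) := by
                apply mul_le_mul_of_nonneg_left ?_ hr0
                exact pow_le_pow_left₀ hr0 hrhalf _
            _ = (2 * r) * (1/2 : ℝ) ^ s := by
                have : s = (s - 1) + 1 := by omega
                rw [this]
                simp [pow_succ]
                ring
      _ ≤ ∑ s ∈ Finset.range (L + 1), (2 * r) * (1/2 : ℝ) ^ s := by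
          apply Finset.sum_le_sum_of_subset_of_nonneg
          · intro s hs
            rw [Finset.mem_Icc] at hs
            rw [Finset.mem_range]
            omega
          · intro s _ _
            positivity
      _ = (2 * r) * ∑ s ∈ Finset.range (L + 1), (1/2 : ℝ) ^ s := by
          rw [Finset.mul_sum]
      _ ≤ (2 * r) * 2 := by
          apply mul_le_mul_of_nonneg_left (sum_geometric_two_le _) (by positivity)
      _ = 4 * (K / l) := by rw [hrdef]; ring

lemma aux_measure_bound (n : ℕ) (σ : Sym2 (Fin n) → ℝ≥0∞) (hσ1 : ∀ e, σ e ≤ 1)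
    (p : ℝ) (hp : 0 ≤ p) (hσ : ∀ e, σ e ≤ ENNReal.ofReal p) (x : ℝ) (hx : 0 ≤ x) :
    (Measure.pi fun e : Sym2 (Fin n) => (PMF.bernoulliENNReal (σ e) (hσ1 e)).toMeasure)
      {ω : Sym2 (Fin n) → Bool | ∃ S : Finset (Fin n),
        (S.card : ℝ) ≤ x ∧
        3 * S.card < {e : Sym2 (Fin n) | ¬ e.IsDiag ∧ ω e = true ∧ ∀ v ∈ e, v ∈ S}.ncard} ≤
    ∑ s ∈ Finset.Icc 1 ⌊x⌋₊,
      (n.choose s : ℝ≥0∞) * (((s ^ 2).choose (3 * s) : ℕ) : ℝ≥0∞) * ENNReal.ofReal p ^ (3 * s) := by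
  classical
  set μ := Measure.pi fun e : Sym2 (Fin n) => (PMF.bernoulliENNReal (σ e) (hσ1 e)).toMeasure with hμ
  -- cylinder measure bound
  have hcyl : ∀ T : Finset (Sym2 (Fin n)),
      μ {ω : Sym2 (Fin n) → Bool | ∀ e ∈ T, ω e = true} ≤ ENNReal.ofReal p ^ T.card := by
    intro T
    have hset : {ω : Sym2 (Fin n) → Bool | ∀ e ∈ T, ω e = true}
        = Set.univ.pi (fun e => if e ∈ T then {true} else Set.univ) := by
      ext ω
      simp only [Set.mem_setOf_eq, Set.mem_pi, Set.mem_univ, forall_true_left]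
      constructor
      · intro h e
        split
        · next he => simp [h e he]
        · simp
      · intro h e he
        have := h e
        rw [if_pos he] at this
        simpa using this
    have hone : ∀ e : Sym2 (Fin n),
        (PMF.bernoulliENNReal (σ e) (hσ1 e)).toMeasure (if e ∈ T then ({true} : Set Bool) else Set.univ)
          = if e ∈ T then σ e else 1 := by
      intro e
      split
      · rw [PMF.toMeasure_apply_singleton _ _ (measurableSet_singleton _), PMF.bernoulliENNReal, PMF.ofFintype_apply]
        rfl
      · exact measure_univ
    rw [hμ, hset, Measure.pi_pi]
    simp only [hone]
    rw [Finset.prod_ite_mem, Finset.univ_inter]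
    calc ∏ e ∈ T, σ e ≤ ∏ e ∈ T, ENNReal.ofReal p := Finset.prod_le_prod' fun e _ => hσ e
      _ = ENNReal.ofReal p ^ T.card := Finset.prod_const _
  set Edges : Finset (Fin n) → Finset (Sym2 (Fin n)) :=
    fun S => Finset.univ.filter (fun e => ¬ e.IsDiag ∧ ∀ v ∈ e, v ∈ S) with hEdges
  have hEdgesCard : ∀ S : Finset (Fin n), (Edges S).card ≤ S.card ^ 2 := by
    intro S
    have hsub : Edges S ⊆ (S ×ˢ S).image (fun ab => s(ab.1, ab.2)) := by
      intro e he
      rw [hEdges, Finset.mem_filter] at he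
      obtain ⟨-, -, hmem⟩ := he
      induction e with
      | _ a b =>
        refine Finset.mem_image.2 ⟨(a, b), ?_, rfl⟩
        exact Finset.mem_product.2 ⟨hmem a (Sym2.mem_mk_left a b), hmem b (Sym2.mem_mk_right a b)⟩
    calc (Edges S).card ≤ ((S ×ˢ S).image (fun ab => s(ab.1, ab.2))).card := Finset.card_le_card hsub
      _ ≤ (S ×ˢ S).card := Finset.card_image_le
      _ = S.card ^ 2 := by rw [Finset.card_product]; ring
  -- union bound
  have hsub : {ω : Sym2 (Fin n) → Bool | ∃ S : Finset (Fin n),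
        (S.card : ℝ) ≤ x ∧
        3 * S.card < {e : Sym2 (Fin n) | ¬ e.IsDiag ∧ ω e = true ∧ ∀ v ∈ e, v ∈ S}.ncard}
      ⊆ ⋃ s ∈ Finset.Icc 1 ⌊x⌋₊, ⋃ S ∈ Finset.powersetCard s (Finset.univ : Finset (Fin n)),
          ⋃ T ∈ (Edges S).powersetCard (3 * s),
            {ω : Sym2 (Fin n) → Bool | ∀ e ∈ T, ω e = true} := by
    rintro ω ⟨S, hS1, hS2⟩
    have hEq : {e : Sym2 (Fin n) | ¬ e.IsDiag ∧ ω e = true ∧ ∀ v ∈ e, v ∈ S}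
        = ↑((Edges S).filter (fun e => ω e = true)) := by
      ext e
      simp only [Set.mem_setOf_eq, Finset.coe_filter, Finset.mem_filter, hEdges,
        Finset.mem_univ, true_and, Set.mem_setOf_eq]
      tauto
    rw [hEq, Set.ncard_coe_finset] at hS2
    obtain ⟨T, hT, hTcard⟩ := Finset.exists_subset_card_eq (le_of_lt hS2)
    have hS0 : 1 ≤ S.card := by
      by_contra h
      push_neg at h
      interval_cases hc : S.card
      · have : ((Edges S).filter (fun e => ω e = true)).card = 0 := by
          rw [Finset.card_eq_zero]
          rw [Finset.card_eq_zero] at hc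
          subst hc
          ext e
          simp only [Finset.mem_filter, hEdges, Finset.mem_univ, true_and,
            Finset.notMem_empty, iff_false]
          rintro ⟨⟨hd, hall⟩, -⟩
          obtain ⟨a, b⟩ := e
          exact absurd (hall a (Sym2.mem_mk_left a b)) (by simp)
        omega
    have hSL : S.card ≤ ⌊x⌋₊ := Nat.le_floor hS1
    simp only [Set.mem_iUnion]
    refine ⟨S.card, Finset.mem_Icc.2 ⟨hS0, hSL⟩, S, ?_, T, ?_, ?_⟩
    · exact Finset.mem_powersetCard_univ.2 rfl
    · exact Finset.mem_powersetCard.2 ⟨hT.trans (Finset.filter_subset _ _), hTcard⟩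
    · intro e he
      exact (Finset.mem_filter.1 (hT he)).2
  calc μ _ ≤ μ (⋃ s ∈ Finset.Icc 1 ⌊x⌋₊, ⋃ S ∈ Finset.powersetCard s (Finset.univ : Finset (Fin n)),
          ⋃ T ∈ (Edges S).powersetCard (3 * s),
            {ω : Sym2 (Fin n) → Bool | ∀ e ∈ T, ω e = true}) := measure_mono hsub
    _ ≤ ∑ s ∈ Finset.Icc 1 ⌊x⌋₊, μ (⋃ S ∈ Finset.powersetCard s (Finset.univ : Finset (Fin n)),
          ⋃ T ∈ (Edges S).powersetCard (3 * s),
            {ω : Sym2 (Fin n) → Bool | ∀ e ∈ T, ω e = true}) := measure_biUnion_finset_le _ _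
    _ ≤ ∑ s ∈ Finset.Icc 1 ⌊x⌋₊, ∑ S ∈ Finset.powersetCard s (Finset.univ : Finset (Fin n)),
          μ (⋃ T ∈ (Edges S).powersetCard (3 * s),
            {ω : Sym2 (Fin n) → Bool | ∀ e ∈ T, ω e = true}) :=
        Finset.sum_le_sum fun s _ => measure_biUnion_finset_le _ _
    _ ≤ ∑ s ∈ Finset.Icc 1 ⌊x⌋₊, ∑ S ∈ Finset.powersetCard s (Finset.univ : Finset (Fin n)),
          ∑ T ∈ (Edges S).powersetCard (3 * s),
            μ {ω : Sym2 (Fin n) → Bool | ∀ e ∈ T, ω e = true} :=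
        Finset.sum_le_sum fun s _ => Finset.sum_le_sum fun S _ => measure_biUnion_finset_le _ _
    _ ≤ ∑ s ∈ Finset.Icc 1 ⌊x⌋₊, ∑ S ∈ Finset.powersetCard s (Finset.univ : Finset (Fin n)),
          ∑ _T ∈ (Edges S).powersetCard (3 * s), ENNReal.ofReal p ^ (3 * s) := by
        refine Finset.sum_le_sum fun s _ => Finset.sum_le_sum fun S _ =>
          Finset.sum_le_sum fun T hT => ?_
        have := hcyl T
        rwa [(Finset.mem_powersetCard.1 hT).2] at this
    _ ≤ ∑ s ∈ Finset.Icc 1 ⌊x⌋₊,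
          (n.choose s : ℝ≥0∞) * (((s ^ 2).choose (3 * s) : ℕ) : ℝ≥0∞) * ENNReal.ofReal p ^ (3 * s) := by
        refine Finset.sum_le_sum fun s hs => ?_
        simp only [Finset.sum_const, Finset.card_powersetCard, nsmul_eq_mul]
        calc ∑ S ∈ Finset.powersetCard s (Finset.univ : Finset (Fin n)),
              (((Edges S).card.choose (3 * s) : ℕ) : ℝ≥0∞) * ENNReal.ofReal p ^ (3 * s)
            ≤ ∑ _S ∈ Finset.powersetCard s (Finset.univ : Finset (Fin n)),
              (((s ^ 2).choose (3 * s) : ℕ) : ℝ≥0∞) * ENNReal.ofReal p ^ (3 * s) := by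
              refine Finset.sum_le_sum fun S hS => ?_
              have hcard : S.card = s := (Finset.mem_powersetCard.1 hS).2
              have hle : (Edges S).card.choose (3 * s) ≤ (s ^ 2).choose (3 * s) :=
                Nat.choose_le_choose _ (by rw [← hcard]; exact hEdgesCard S)
              exact mul_le_mul_left (Nat.cast_le.2 hle) _
          _ = (n.choose s : ℝ≥0∞) * (((s ^ 2).choose (3 * s) : ℕ) : ℝ≥0∞)
                * ENNReal.ofReal p ^ (3 * s) := by
              rw [Finset.sum_const, Finset.card_powersetCard, Finset.card_univ,
                Fintype.card_fin, nsmul_eq_mul, mul_assoc]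

/-- In a random graph on `n` vertices in which every pair is an edge independently with
probability at most `C log n / n`, the expected number of vertex sets `S` of size
`s ≤ n/log² n` inducing more than `3s` edges, summed over all such `s`, is bounded by
`∑_s C(n,s) C(s²,3s) (C log n / n)^{3s} = o(1)`; hence a.a.s. every set `S` with
`|S| ≤ n/log² n` induces at most `3|S|` edges. -/
theorem stmt_18 (C : ℝ) (hC : 0 < C)
    (σ : ∀ n : ℕ, Sym2 (Fin n) → ℝ≥0∞) (hσ1 : ∀ n e, σ n e ≤ 1)
    (hσ : ∀ n e, σ n e ≤ ENNReal.ofReal (C * Real.log n / n)) :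
    Tendsto (fun n : ℕ => ∑ s ∈ Finset.Icc 1 ⌊(n : ℝ) / (Real.log n) ^ 2⌋₊,
        (n.choose s : ℝ) * ((s ^ 2).choose (3 * s) : ℝ) * (C * Real.log n / n) ^ (3 * s))
      atTop (nhds 0) ∧
    Tendsto (fun n : ℕ =>
        (Measure.pi fun e : Sym2 (Fin n) => (PMF.bernoulliENNReal (σ n e) (hσ1 n e)).toMeasure)
          {ω : Sym2 (Fin n) → Bool | ∃ S : Finset (Fin n),
            (S.card : ℝ) ≤ (n : ℝ) / (Real.log n) ^ 2 ∧
            3 * S.card <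
              {e : Sym2 (Fin n) | ¬ e.IsDiag ∧ ω e = true ∧ ∀ v ∈ e, v ∈ S}.ncard})
      atTop (nhds 0) := by
  have hsum := aux_sum_tendsto C hC
  refine ⟨hsum, ?_⟩
  have hp : ∀ n : ℕ, 0 ≤ C * Real.log n / n := by
    intro n
    rcases Nat.eq_zero_or_pos n with h | h
    · simp [h]
    · have hl : (0:ℝ) ≤ Real.log n := Real.log_nonneg (by exact_mod_cast h)
      positivity
  have hbound : ∀ n : ℕ,
      (Measure.pi fun e : Sym2 (Fin n) => (PMF.bernoulliENNReal (σ n e) (hσ1 n e)).toMeasure)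
          {ω : Sym2 (Fin n) → Bool | ∃ S : Finset (Fin n),
            (S.card : ℝ) ≤ (n : ℝ) / (Real.log n) ^ 2 ∧
            3 * S.card <
              {e : Sym2 (Fin n) | ¬ e.IsDiag ∧ ω e = true ∧ ∀ v ∈ e, v ∈ S}.ncard}
        ≤ ENNReal.ofReal (∑ s ∈ Finset.Icc 1 ⌊(n : ℝ) / (Real.log n) ^ 2⌋₊,
            (n.choose s : ℝ) * ((s ^ 2).choose (3 * s) : ℝ) * (C * Real.log n / n) ^ (3 * s)) := by
    intro n
    have hx : (0:ℝ) ≤ (n : ℝ) / (Real.log n) ^ 2 := by positivity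
    refine (aux_measure_bound n (σ n) (hσ1 n) _ (hp n) (hσ n) _ hx).trans ?_
    rw [ENNReal.ofReal_sum_of_nonneg (fun s _ => by
      have := hp n; positivity)]
    refine le_of_eq (Finset.sum_congr rfl fun s _ => ?_)
    rw [ENNReal.ofReal_mul (by positivity), ENNReal.ofReal_mul (by positivity),
      ENNReal.ofReal_natCast, ENNReal.ofReal_natCast, ENNReal.ofReal_pow (hp n)]
  have h2 : Tendsto (fun n : ℕ => ENNReal.ofReal
      (∑ s ∈ Finset.Icc 1 ⌊(n : ℝ) / (Real.log n) ^ 2⌋₊,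
        (n.choose s : ℝ) * ((s ^ 2).choose (3 * s) : ℝ) * (C * Real.log n / n) ^ (3 * s)))
      atTop (nhds 0) := by
    have := ENNReal.tendsto_ofReal (a := 0) hsum
    simpa using this
  exact tendsto_of_tendsto_of_tendsto_of_le_of_le tendsto_const_nhds h2
    (fun n => zero_le) hbound
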